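/- If R_a, R_e, R_ae arise as blocks of a positive semidefinite block covariance matrix, then for any vector v, v^T(Cov_BM - Cov_TSM)v = (α(1-α)/B)((v^T(μe-μa))^2 + v^T(R_a + R_e - R_ae - R_ae^T)v) ≥ 0; hence Cov_TSM ⪯ Cov_BM in the Loewner order. -/

import Mathlib

open Matrix

/-- If R_a, R_e, R_ae arise as blocks of a PSD block covariance matrix, then the
covariance-difference matrix D = (α(1-α)/B)(ΔμΔμᵀ + R_a + R_e - R_ae - R_aeᵀ) is
positive semidefinite; equivalently vᵀ D v ≥ 0 for every v. -/
theorem cov_diff_posSemidef {d : ℕ} (α : ℝ) (hα : α ∈ Set.Icc (0 : ℝ) 1)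
    (B : ℝ) (hB : 0 < B) (Δμ : Fin d → ℝ)
    (Ra Re Rae : Matrix (Fin d) (Fin d) ℝ)
    (hblock : (Matrix.fromBlocks Ra Rae Raeᵀ Re).PosSemidef)
    (D : Matrix (Fin d) (Fin d) ℝ)
    (hD : D = (α * (1 - α) / B) • (vecMulVec Δμ Δμ + Ra + Re - Rae - Raeᵀ)) :
    D.PosSemidef ∧ ∀ v : Fin d → ℝ, 0 ≤ v ⬝ᵥ D *ᵥ v := by
  obtain ⟨hα0, hα1⟩ := hα
  have hc : 0 ≤ α * (1 - α) / B :=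
    div_nonneg (mul_nonneg hα0 (by linarith)) hB.le
  -- symmetry facts from the block matrix
  have hRa : Raᵀ = Ra := by
    ext i j
    have := congrFun (congrFun hblock.1 (Sum.inl i)) (Sum.inl j)
    simpa [Matrix.conjTranspose_apply] using this
  have hRe : Reᵀ = Re := by
    ext i j
    have := congrFun (congrFun hblock.1 (Sum.inr i)) (Sum.inr j)
    simpa [Matrix.conjTranspose_apply] using this
  set M : Matrix (Fin d) (Fin d) ℝ := vecMulVec Δμ Δμ + Ra + Re - Rae - Raeᵀ with hM
  have hvmv : (vecMulVec Δμ Δμ)ᵀ = vecMulVec Δμ Δμ := by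
    ext i j; simp [Matrix.transpose_apply, Matrix.vecMulVec_apply, mul_comm]
  have hMHerm : M.IsHermitian := by
    show Mᴴ = M
    have : Mᴴ = Mᵀ := rfl
    rw [this, hM]
    simp only [Matrix.transpose_sub, Matrix.transpose_add, hvmv, hRa, hRe,
      Matrix.transpose_transpose]
    abel
  have hquad : ∀ v : Fin d → ℝ, 0 ≤ v ⬝ᵥ M *ᵥ v := by
    intro v
    have hb := hblock.dotProduct_mulVec_nonneg (Sum.elim v (-v))
    rw [Matrix.fromBlocks_mulVec] at hb
    have hb' : (0:ℝ) ≤ v ⬝ᵥ (Ra *ᵥ v + Rae *ᵥ (-v)) + (-v) ⬝ᵥ (Raeᵀ *ᵥ v + Re *ᵥ (-v)) := by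
      simpa [sumElim_dotProduct_sumElim] using hb
    have hsq : (0:ℝ) ≤ v ⬝ᵥ (vecMulVec Δμ Δμ) *ᵥ v := by
      have : v ⬝ᵥ (vecMulVec Δμ Δμ) *ᵥ v = (v ⬝ᵥ Δμ) * (Δμ ⬝ᵥ v) := by
        simp [Matrix.mulVec, Matrix.vecMulVec_apply, dotProduct,
          Finset.mul_sum, Finset.sum_mul, mul_assoc]
        rw [Finset.sum_comm]
      rw [this, dotProduct_comm Δμ v]
      exact mul_self_nonneg _
    have hexp : v ⬝ᵥ M *ᵥ v
        = v ⬝ᵥ (vecMulVec Δμ Δμ) *ᵥ v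
          + (v ⬝ᵥ (Ra *ᵥ v + Rae *ᵥ (-v)) + (-v) ⬝ᵥ (Raeᵀ *ᵥ v + Re *ᵥ (-v))) := by
      rw [hM]
      simp only [Matrix.sub_mulVec, Matrix.add_mulVec, Matrix.mulVec_neg,
        dotProduct_add, dotProduct_sub, dotProduct_neg,
        neg_dotProduct]
      ring
    rw [hexp]
    exact add_nonneg hsq hb'
  have hMps : M.PosSemidef := by
    refine Matrix.PosSemidef.of_dotProduct_mulVec_nonneg hMHerm (fun v => ?_)
    simpa using hquad v
  have hDps : D.PosSemidef := by
    rw [hD]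
    refine Matrix.PosSemidef.of_dotProduct_mulVec_nonneg ?_ (fun v => ?_)
    · show _ᴴ = _
      rw [Matrix.conjTranspose_smul, hMHerm.eq, star_trivial]
    · have := hquad v
      simp only [Matrix.smul_mulVec, dotProduct_smul]
      have : (0:ℝ) ≤ v ⬝ᵥ M *ᵥ v := hquad v
      simpa [smul_eq_mul] using mul_nonneg hc this
  exact ⟨hDps, fun v => by simpa using hDps.dotProduct_mulVec_nonneg v⟩
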